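/- arXiv:1508.03261 — 5 statements merged into one kernel-verified Lean document; each statement's English description precedes it below -/
import Mathlib

section
/- Let A, B be n×n symmetric real matrices with A ⪯ B (i.e., B - A positive semidefinite), and let q be a positive integer. If additionally A and B are positive semidefinite, then tr(A^q) ≤ tr(B^q). -/
open Matrix

attribute [local instance] Matrix.linftyOpNormedRing Matrix.linftyOpNormedAlgebra

private lemma psd_trace_nonneg {n : ℕ} {M : Matrix (Fin n) (Fin n) ℝ}
    (hM : M.PosSemidef) : 0 ≤ M.trace := by
  rw [Matrix.trace]
  refine Finset.sum_nonneg fun i _ => ?_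
  have := (posSemidef_iff_dotProduct_mulVec.mp hM).2 (Pi.single i 1)
  simpa [dotProduct, Matrix.mulVec, Pi.single_apply, Finset.mul_sum,
    mul_comm] using this

private lemma psd_smul {n : ℕ} {c : ℝ} (hc : 0 ≤ c) {M : Matrix (Fin n) (Fin n) ℝ}
    (hM : M.PosSemidef) : (c • M).PosSemidef := by
  rw [posSemidef_iff_dotProduct_mulVec] at hM ⊢
  constructor
  · show (c • M)ᴴ = c • M
    rw [Matrix.conjTranspose_smul, hM.1.eq]
    simp
  intro x
  have h := hM.2 x
  rw [Matrix.smul_mulVec, dotProduct_smul]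
  exact mul_nonneg hc h

open scoped MatrixOrder in
private lemma psd_trace_mul_nonneg {n : ℕ} {X Y : Matrix (Fin n) (Fin n) ℝ}
    (hX : X.PosSemidef) (hY : Y.PosSemidef) : 0 ≤ (X * Y).trace := by
  have hs := (CFC.sqrt_nonneg X).posSemidef
  have hXs : CFC.sqrt X * CFC.sqrt X = X := CFC.sqrt_mul_sqrt_self X hX.nonneg
  have herm : (CFC.sqrt X)ᴴ = CFC.sqrt X := hs.isHermitian
  have hpsd : (CFC.sqrt X * Y * CFC.sqrt X).PosSemidef := by
    have := hY.mul_mul_conjTranspose_same (CFC.sqrt X)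
    rwa [herm] at this
  have htr : (CFC.sqrt X * Y * CFC.sqrt X).trace = (X * Y).trace := by
    rw [Matrix.trace_mul_cycle, hXs]
  rw [← htr]
  exact psd_trace_nonneg hpsd

theorem trace_pow_mono_of_loewner {n : ℕ} (A B : Matrix (Fin n) (Fin n) ℝ)
    (hA : A.PosSemidef) (hB : B.PosSemidef) (hAB : (B - A).PosSemidef)
    (q : ℕ) (hq : 1 ≤ q) :
    (A ^ q).trace ≤ (B ^ q).trace := by
  set C : Matrix (Fin n) (Fin n) ℝ := B - A with hC
  set M : ℝ → Matrix (Fin n) (Fin n) ℝ := fun t => A + t • C with hMdef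
  -- M t is PSD for t ∈ [0,1]
  have hMpsd : ∀ t : ℝ, 0 ≤ t → (M t).PosSemidef := fun t ht =>
    hA.add (psd_smul ht hAB)
  -- derivative of M
  have hM : ∀ t : ℝ, HasDerivAt M C t := by
    intro t
    have h1 : HasDerivAt (fun t : ℝ => t • C) ((1 : ℝ) • C) t :=
      (hasDerivAt_id t).smul_const C
    have h2 := h1.const_add A
    rw [one_smul] at h2
    exact h2
  -- derivative of M^k
  have hMpow : ∀ (k : ℕ) (t : ℝ), HasDerivAt (fun t => M t ^ k)
      (∑ i ∈ Finset.range k, M t ^ i * C * M t ^ (k - 1 - i)) t := by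
    intro k
    induction k with
    | zero => intro t; simp only [pow_zero, Finset.sum_range_zero]; exact hasDerivAt_const t (1 : Matrix (Fin n) (Fin n) ℝ)
    | succ k ih =>
      intro t
      have h := (ih t).mul (hM t)
      have heq : (∑ i ∈ Finset.range k, M t ^ i * C * M t ^ (k - 1 - i)) * M t
          + M t ^ k * C
          = ∑ i ∈ Finset.range (k + 1), M t ^ i * C * M t ^ (k + 1 - 1 - i) := by
        rw [Finset.sum_range_succ, Finset.sum_mul]
        congr 1
        · refine Finset.sum_congr rfl fun i hi => ?_
          have hi' : i < k := Finset.mem_range.mp hi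
          rw [mul_assoc, ← pow_succ]
          congr 2
          omega
        · simp
      have : HasDerivAt (fun t => M t ^ k * M t)
          (∑ i ∈ Finset.range (k + 1), M t ^ i * C * M t ^ (k + 1 - 1 - i)) t := by
        rw [← heq]; exact h
      simpa [pow_succ] using this
  -- trace as a continuous linear map
  let L : Matrix (Fin n) (Fin n) ℝ →L[ℝ] ℝ :=
    LinearMap.toContinuousLinearMap (Matrix.traceLinearMap (Fin n) ℝ ℝ)
  have hLapp : ∀ X : Matrix (Fin n) (Fin n) ℝ, L X = X.trace := fun _ => rfl
  set p : ℝ → ℝ := fun t => (M t ^ q).trace with hp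
  have hpderiv : ∀ t : ℝ, HasDerivAt p
      ((∑ i ∈ Finset.range q, M t ^ i * C * M t ^ (q - 1 - i)).trace) t := by
    intro t
    have := L.hasFDerivAt.comp_hasDerivAt t (hMpow q t)
    exact this
  have hderiv_nonneg : ∀ t : ℝ, 0 ≤ t →
      0 ≤ (∑ i ∈ Finset.range q, M t ^ i * C * M t ^ (q - 1 - i)).trace := by
    intro t ht
    rw [Matrix.trace_sum]
    refine Finset.sum_nonneg fun i _ => ?_
    rw [Matrix.trace_mul_cycle]
    have h1 : (M t ^ (q - 1 - i) * (M t ^ i) * C).trace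
        = (M t ^ (q - 1 - i + i) * C).trace := by rw [pow_add]
    rw [h1]
    exact psd_trace_mul_nonneg ((hMpsd t ht).pow _) hAB
  have hmono : MonotoneOn p (Set.Icc (0 : ℝ) 1) := by
    refine monotoneOn_of_deriv_nonneg (convex_Icc 0 1) ?_ ?_ ?_
    · exact fun t _ => ((hpderiv t).differentiableAt).continuousAt.continuousWithinAt
    · exact fun t _ => ((hpderiv t).differentiableAt).differentiableWithinAt
    · intro t ht
      rw [interior_Icc] at ht
      rw [(hpderiv t).deriv]
      exact hderiv_nonneg t ht.1.le
  have h01 : p 0 ≤ p 1 :=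
    hmono (Set.mem_Icc.mpr ⟨le_refl 0, zero_le_one⟩)
      (Set.mem_Icc.mpr ⟨zero_le_one, le_refl 1⟩) zero_le_one
  have hp0 : p 0 = (A ^ q).trace := by simp [hp, hMdef]
  have hp1 : p 1 = (B ^ q).trace := by simp [hp, hMdef, hC]
  rw [hp0, hp1] at h01
  exact h01
end

section
/- Let D be a symmetric n×n real matrix with 0 ⪯ D ⪯ (ε/q)·I where q ≥ 2 is an integer and 0 < ε ≤ 1. Then (I - D)^q ⪯ I - qD + (q(q-1)/2)·D^2, and consequently (I - D)^q ⪯ I - (q - ε(q-1)/2)·D. -/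
open Matrix

private lemma scalar_ineq (q : ℕ) {x : ℝ} (hx0 : 0 ≤ x) (hx1 : x ≤ 1) :
    (1 - x) ^ q ≤ 1 - q * x + ((q : ℝ) * ((q : ℝ) - 1) / 2) * x ^ 2 := by
  induction q with
  | zero => norm_num
  | succ q ih =>
    have h1x : (0:ℝ) ≤ 1 - x := by linarith
    have hc : (0:ℝ) ≤ (q : ℝ) * ((q : ℝ) - 1) / 2 := by
      rcases Nat.eq_zero_or_pos q with h | h
      · simp [h]
      · have : (1:ℝ) ≤ q := by exact_mod_cast h
        nlinarith
    have hmul := mul_le_mul_of_nonneg_right ih h1x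
    rw [pow_succ]
    push_cast
    nlinarith [mul_nonneg (mul_nonneg hc hx0) (mul_nonneg hx0 hx0)]

private def conjDiag {n : ℕ} (U : Matrix (Fin n) (Fin n) ℝ) (hU : star U * U = 1) :
    (Fin n → ℝ) →+* Matrix (Fin n) (Fin n) ℝ where
  toFun v := U * diagonalRingHom (Fin n) ℝ v * star U
  map_one' := by
    show U * diagonalRingHom (Fin n) ℝ 1 * star U = 1
    rw [_root_.map_one, mul_one, mul_eq_one_comm.mp hU]
  map_mul' v w := by
    show U * diagonalRingHom (Fin n) ℝ (v * w) * star U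
      = U * diagonalRingHom (Fin n) ℝ v * star U * (U * diagonalRingHom (Fin n) ℝ w * star U)
    have h : U * diagonalRingHom (Fin n) ℝ v * star U * (U * diagonalRingHom (Fin n) ℝ w * star U)
        = U * (diagonalRingHom (Fin n) ℝ v * (star U * U) * diagonalRingHom (Fin n) ℝ w) * star U := by
      simp only [Matrix.mul_assoc]
    rw [h, hU, mul_one, ← _root_.map_mul]
  map_zero' := by
    show U * diagonalRingHom (Fin n) ℝ 0 * star U = 0
    rw [map_zero, Matrix.mul_zero, Matrix.zero_mul]
  map_add' v w := by
    show U * diagonalRingHom (Fin n) ℝ (v + w) * star U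
      = U * diagonalRingHom (Fin n) ℝ v * star U + U * diagonalRingHom (Fin n) ℝ w * star U
    rw [map_add, Matrix.mul_add, Matrix.add_mul]

private lemma conjDiag_apply {n : ℕ} (U : Matrix (Fin n) (Fin n) ℝ) (hU : star U * U = 1)
    (v : Fin n → ℝ) : conjDiag U hU v = U * diagonal v * star U := rfl

private lemma conjDiag_smul {n : ℕ} (U : Matrix (Fin n) (Fin n) ℝ) (hU : star U * U = 1)
    (c : ℝ) (v : Fin n → ℝ) : conjDiag U hU (c • v) = c • conjDiag U hU v := by
  rw [conjDiag_apply, conjDiag_apply, diagonal_smul, Matrix.mul_smul, Matrix.smul_mul]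

private lemma conjDiag_posSemidef {n : ℕ} (U : Matrix (Fin n) (Fin n) ℝ)
    (hU : star U * U = 1) {v : Fin n → ℝ} (hv : ∀ i, 0 ≤ v i) :
    (conjDiag U hU v).PosSemidef := by
  rw [conjDiag_apply, Matrix.star_eq_conjTranspose]
  exact (Matrix.PosSemidef.diagonal hv).mul_mul_conjTranspose_same U

theorem pow_one_sub_le {n q : ℕ} (hq : 2 ≤ q) (ε : ℝ) (hε : 0 < ε) (hε1 : ε ≤ 1)
    (D : Matrix (Fin n) (Fin n) ℝ) (hD : D.PosSemidef)
    (hDle : ((ε / q) • (1 : Matrix (Fin n) (Fin n) ℝ) - D).PosSemidef) :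
    ((1 - q • D + ((q * (q - 1) : ℝ) / 2) • (D ^ 2)) - (1 - D) ^ q).PosSemidef ∧
    ((1 - ((q : ℝ) - ε * ((q : ℝ) - 1) / 2) • D) - (1 - D) ^ q).PosSemidef := by
  have hH : D.IsHermitian := hD.1
  have hq2 : (2:ℝ) ≤ (q:ℝ) := by exact_mod_cast hq
  have hq0 : (0:ℝ) < (q:ℝ) := by linarith
  have hU : star (hH.eigenvectorUnitary : Matrix (Fin n) (Fin n) ℝ)
      * (hH.eigenvectorUnitary : Matrix (Fin n) (Fin n) ℝ) = 1 :=
    Matrix.mem_unitaryGroup_iff'.mp (hH.eigenvectorUnitary).2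
  set U : Matrix (Fin n) (Fin n) ℝ := (hH.eigenvectorUnitary : Matrix (Fin n) (Fin n) ℝ) with hUdef
  set d : Fin n → ℝ := hH.eigenvalues with hddef
  have hspec : D = conjDiag U hU d := by
    rw [conjDiag_apply]
    have h := hH.spectral_theorem
    rwa [RCLike.ofReal_real_eq_id, Function.id_comp] at h
  have hd0 : ∀ i, 0 ≤ d i := hD.eigenvalues_nonneg
  have hdle : ∀ i, d i ≤ ε / q := by
    intro i
    have hv := hH.mulVec_eigenvectorBasis i
    set v : Fin n → ℝ := ⇑(hH.eigenvectorBasis i) with hvdef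
    have hvne : v ≠ 0 := by
      intro h
      exact hH.eigenvectorBasis.orthonormal.ne_zero i (by ext j; exact congrFun h j)
    have hstar : star v = v := by simp
    have hnn : 0 ≤ dotProduct v v := by
      have := dotProduct_star_self_nonneg v
      rwa [hstar] at this
    have hne : dotProduct v v ≠ 0 := fun h => hvne (dotProduct_self_eq_zero.mp h)
    have hpos : 0 < dotProduct v v := hnn.lt_of_ne (Ne.symm hne)
    have h2 := hDle.dotProduct_mulVec_nonneg v
    rw [hstar, sub_mulVec, smul_mulVec, one_mulVec, hv, dotProduct_sub,
      dotProduct_smul, dotProduct_smul, smul_eq_mul, smul_eq_mul] at h2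
    have hfin : d i * dotProduct v v ≤ (ε / q) * dotProduct v v := by linarith
    exact le_of_mul_le_mul_right hfin hpos
  have hd1 : ∀ i, d i ≤ 1 := by
    intro i
    refine (hdle i).trans ?_
    rw [div_le_one hq0]
    linarith
  have hqd : ∀ i, (q:ℝ) * d i ≤ ε := by
    intro i
    have := hdle i
    rw [le_div_iff₀ hq0] at this
    linarith [this]
  constructor
  · have e1 : (1 - q • D + ((q * (q - 1) : ℝ) / 2) • (D ^ 2)) - (1 - D) ^ q
        = conjDiag U hU ((1 - q • d + ((q * (q - 1) : ℝ) / 2) • (d ^ 2)) - (1 - d) ^ q) := by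
      rw [hspec]
      simp only [map_sub, map_add, map_pow, _root_.map_one, map_nsmul, conjDiag_smul]
    rw [e1]
    apply conjDiag_posSemidef
    intro i
    have := scalar_ineq q (hd0 i) (hd1 i)
    simp only [Pi.sub_apply, Pi.add_apply, Pi.one_apply, Pi.smul_apply, Pi.pow_apply,
      smul_eq_mul, nsmul_eq_mul, Pi.mul_apply, Pi.natCast_apply]
    linarith
  · have e2 : (1 - ((q : ℝ) - ε * ((q : ℝ) - 1) / 2) • D) - (1 - D) ^ q
        = conjDiag U hU ((1 - ((q : ℝ) - ε * ((q : ℝ) - 1) / 2) • d) - (1 - d) ^ q) := by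
      rw [hspec]
      simp only [map_sub, map_pow, _root_.map_one, conjDiag_smul]
    rw [e2]
    apply conjDiag_posSemidef
    intro i
    have hkey := scalar_ineq q (hd0 i) (hd1 i)
    simp only [Pi.sub_apply, Pi.one_apply, Pi.smul_apply, Pi.pow_apply, smul_eq_mul]
    nlinarith [mul_nonneg (mul_nonneg (show (0:ℝ) ≤ ((q:ℝ) - 1) / 2 by linarith) (hd0 i))
      (show (0:ℝ) ≤ ε - (q:ℝ) * d i by linarith [hqd i])]
end

section
/- Let q ≥ 10 be an integer and 0 < ε ≤ 1/10. Let Y be a symmetric positive definite n×n real matrix and w ∈ R^n with w^T Y^{-1} w ≤ ε/q. Then tr((Y + w w^T)^{-q}) ≤ tr(Y^{-q}) - q(1-ε) · w^T Y^{-(q+1)} w. -/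
set_option maxHeartbeats 1600000
open Matrix Finset
variable {n : ℕ}

lemma dot_swap (M : Matrix (Fin n) (Fin n) ℝ) (x y : Fin n → ℝ) :
    x ⬝ᵥ M *ᵥ y = (Mᵀ *ᵥ x) ⬝ᵥ y := by
  rw [Matrix.dotProduct_mulVec, Matrix.mulVec_transpose]

lemma mul_vecMulVec (M : Matrix (Fin n) (Fin n) ℝ) (x y : Fin n → ℝ) :
    M * vecMulVec x y = vecMulVec (M *ᵥ x) y := by
  ext i j
  simp only [Matrix.mul_apply, vecMulVec_apply, Matrix.mulVec, dotProduct, Finset.sum_mul]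
  exact Finset.sum_congr rfl fun k _ => by ring

lemma vecMulVec_mul (M : Matrix (Fin n) (Fin n) ℝ) (x y : Fin n → ℝ) :
    vecMulVec x y * M = vecMulVec x (Mᵀ *ᵥ y) := by
  ext i j
  simp [Matrix.mul_apply, vecMulVec_apply, Matrix.mulVec, dotProduct, Matrix.transpose,
    Finset.mul_sum, mul_assoc, mul_comm, mul_left_comm]

lemma vecMulVec_mulVec (x y z : Fin n → ℝ) :
    vecMulVec x y *ᵥ z = (y ⬝ᵥ z) • x := by
  ext i
  simp [vecMulVec_apply, Matrix.mulVec, dotProduct, Finset.mul_sum, mul_assoc,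
    mul_comm, mul_left_comm]

lemma trace_vecMulVec' (x y : Fin n → ℝ) : (vecMulVec x y).trace = y ⬝ᵥ x := by
  simp [Matrix.trace, Matrix.diag, vecMulVec_apply, dotProduct, mul_comm]

lemma vecMulVec_smul_left (c : ℝ) (x y : Fin n → ℝ) :
    vecMulVec (c • x) y = c • vecMulVec x y := by
  ext i j; simp [vecMulVec_apply, mul_assoc]

lemma telescope_pow_sub (X Z : Matrix (Fin n) (Fin n) ℝ) (m : ℕ) :
    X ^ m - Z ^ m = ∑ k ∈ Finset.range m, Z ^ k * (X - Z) * X ^ (m - 1 - k) := by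
  induction m with
  | zero => simp
  | succ m ih =>
    rw [Finset.sum_range_succ']
    have h1 : ∀ i, m + 1 - 1 - (i + 1) = m - 1 - i := fun i => by omega
    have : ∀ i ∈ Finset.range m, Z ^ (i + 1) * (X - Z) * X ^ (m + 1 - 1 - (i + 1))
        = Z * (Z ^ i * (X - Z) * X ^ (m - 1 - i)) := by
      intro i _
      rw [h1 i, pow_succ']
      rw [mul_assoc, mul_assoc, mul_assoc]
    rw [Finset.sum_congr rfl this, ← Finset.mul_sum, ← ih]
    have hZ : Z * Z ^ m = Z ^ m * Z := by rw [← pow_succ', pow_succ]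
    have hX : X * X ^ m = X ^ m * X := by rw [← pow_succ', pow_succ]
    simp only [Nat.add_sub_cancel, Nat.sub_zero, pow_zero, one_mul, pow_succ, pow_succ']
    noncomm_ring
    rw [hZ, hX]
    abel

lemma dot_shift (A B : Matrix (Fin n) (Fin n) ℝ) (hA : Aᵀ = A) (x y : Fin n → ℝ) :
    x ⬝ᵥ (A * B) *ᵥ y = (A *ᵥ x) ⬝ᵥ (B *ᵥ y) := by
  rw [← Matrix.mulVec_mulVec, Matrix.dotProduct_mulVec, ← Matrix.mulVec_transpose, hA]

lemma transpose_pow_symm {M : Matrix (Fin n) (Fin n) ℝ} (hM : Mᵀ = M) (k : ℕ) :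
    (M ^ k)ᵀ = M ^ k := by
  induction k with
  | zero => simp
  | succ k ih => rw [pow_succ, Matrix.transpose_mul, hM, ih, ← pow_succ', ← pow_succ]

lemma posDef_pow {M : Matrix (Fin n) (Fin n) ℝ} (hM : M.PosDef) (k : ℕ) :
    (M ^ k).PosDef := by
  have hMt : Mᵀ = M := hM.isHermitian
  have hinj : ∀ j : ℕ, ∀ x : Fin n → ℝ, x ≠ 0 → (M ^ j) *ᵥ x ≠ 0 := by
    intro j x hx h
    exact hx (Matrix.mulVec_injective_iff_isUnit.mpr (hM.isUnit.pow j) (by simpa using h))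
  refine Matrix.PosDef.of_dotProduct_mulVec_pos (hM.posSemidef.pow k).isHermitian fun x hx => ?_
  simp only [star_trivial]
  rcases Nat.even_or_odd k with ⟨j, hj⟩ | ⟨j, hj⟩
  · subst hj
    rw [pow_add, dot_shift _ _ (transpose_pow_symm hMt j)]
    have := Matrix.dotProduct_star_self_pos_iff (v := (M ^ j) *ᵥ x) |>.mpr (hinj j x hx)
    simpa using this
  · have hk : 2 * j + 1 = j + (1 + j) := by omega
    rw [hj, hk, pow_add, dot_shift _ _ (transpose_pow_symm hMt j), pow_add, pow_one,
      ← Matrix.mulVec_mulVec]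
    have := hM.dotProduct_mulVec_pos (hinj j x hx)
    simpa using this

lemma dot_shift' (A B : Matrix (Fin n) (Fin n) ℝ) (x y : Fin n → ℝ) :
    x ⬝ᵥ (A * B) *ᵥ y = (Aᵀ *ᵥ x) ⬝ᵥ (B *ᵥ y) := by
  rw [← Matrix.mulVec_mulVec, Matrix.dotProduct_mulVec, ← Matrix.mulVec_transpose]

lemma transpose_pow_symm' {M : Matrix (Fin n) (Fin n) ℝ} (hM : Mᵀ = M) (k : ℕ) :
    (M ^ k)ᵀ = M ^ k := by
  induction k with
  | zero => simp
  | succ k ih => rw [pow_succ, Matrix.transpose_mul, hM, ih, ← pow_succ', ← pow_succ]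

lemma dot_CS (x y : Fin n → ℝ) : (x ⬝ᵥ y) ^ 2 ≤ (x ⬝ᵥ x) * (y ⬝ᵥ y) := by
  have := Finset.sum_mul_sq_le_sq_mul_sq Finset.univ x y
  simpa [dotProduct, sq] using this

lemma psd_CS {N : Matrix (Fin n) (Fin n) ℝ} (hN : N.PosSemidef) (x y : Fin n → ℝ) :
    (x ⬝ᵥ N *ᵥ y) ^ 2 ≤ (x ⬝ᵥ N *ᵥ x) * (y ⬝ᵥ N *ᵥ y) := by
  obtain ⟨C, hC⟩ : ∃ C : Matrix (Fin n) (Fin n) ℝ, N = Cᴴ * C := by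
    open scoped MatrixOrder in exact CStarAlgebra.nonneg_iff_eq_star_mul_self.mp hN.nonneg
  have hCt : Cᴴ = Cᵀ := rfl
  subst hC
  rw [hCt, dot_shift', dot_shift', dot_shift', Matrix.transpose_transpose]
  exact dot_CS _ _

lemma moment_prod_le {N : Matrix (Fin n) (Fin n) ℝ} (hN : N.PosDef) (w : Fin n → ℝ)
    (a b : ℕ) :
    (w ⬝ᵥ N ^ (a + 1) *ᵥ w) * (w ⬝ᵥ N ^ (b + 1) *ᵥ w) ≤
      (w ⬝ᵥ N *ᵥ w) * (w ⬝ᵥ N ^ (a + b + 1) *ᵥ w) := by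
  have hNt : Nᵀ = N := hN.isHermitian
  set m : ℕ → ℝ := fun r => w ⬝ᵥ N ^ r *ᵥ w with hm
  by_cases hw : w = 0
  · simp [hw, m]
  -- positivity of moments
  have hpos : ∀ r, 0 < m r := by
    intro r
    have := (posDef_pow hN r).dotProduct_mulVec_pos hw
    simpa [m] using this
  -- expressing moments as dot products
  have quad_eq : ∀ i j : ℕ, (N ^ i *ᵥ w) ⬝ᵥ (N ^ j *ᵥ w) = m (i + j) := by
    intro i j
    rw [hm]
    simp only
    rw [pow_add, dot_shift', transpose_pow_symm' hNt]
  have quadN : ∀ i j : ℕ, (N ^ i *ᵥ w) ⬝ᵥ N *ᵥ (N ^ j *ᵥ w) = m (i + j + 1) := by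
    intro i j
    rw [Matrix.mulVec_mulVec, ← pow_succ']
    exact quad_eq i (j + 1)
  -- Cauchy-Schwarz log-convexity step
  have hcs : ∀ r, m (r + 1) ^ 2 ≤ m r * m (r + 2) := by
    intro r
    rcases Nat.even_or_odd r with ⟨i, hi⟩ | ⟨i, hi⟩
    · subst hi
      have h1 := dot_CS (N ^ i *ᵥ w) (N ^ (i + 1) *ᵥ w)
      rw [quad_eq, quad_eq, quad_eq] at h1
      convert h1 using 3 <;> omega
    · subst hi
      have h1 := psd_CS hN.posSemidef (N ^ i *ᵥ w) (N ^ (i + 1) *ᵥ w)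
      rw [quadN, quadN, quadN] at h1
      convert h1 using 3 <;> omega
  -- swap step
  have hswap : ∀ a b : ℕ, a ≤ b → m (a + 1) * m b ≤ m a * m (b + 1) := by
    intro a b hab
    induction b, hab using Nat.le_induction with
    | base => rw [mul_comm]
    | succ b hab prev =>
      have h1 : (m (a + 1) * m (b + 1)) * m (b + 1) ≤ (m a * m (b + 2)) * m (b + 1) := by
        nlinarith [mul_le_mul_of_nonneg_left (hcs b) (le_of_lt (hpos (a + 1))),
          mul_le_mul_of_nonneg_right prev (le_of_lt (hpos (b + 2))), hpos b, hpos (b+1),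
          hpos (b+2), hpos a, hpos (a+1)]
      exact le_of_mul_le_mul_right h1 (hpos (b + 1))
  -- chain for a ≤ b
  have hchain : ∀ a b : ℕ, a ≤ b → m (a + 1) * m (b + 1) ≤ m 1 * m (a + b + 1) := by
    intro a
    induction a with
    | zero => intro b _; simp
    | succ a ih =>
      intro b hab
      have h1 : m (a + 2) * m (b + 1) ≤ m (a + 1) * m (b + 2) :=
        hswap (a + 1) (b + 1) (by omega)
      have h2 : m (a + 1) * m (b + 2) ≤ m 1 * m (a + b + 2) := by
        have := ih (b + 1) (by omega)
        convert this using 3 <;> omega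
      calc m (a + 1 + 1) * m (b + 1) ≤ m (a + 1) * m (b + 2) := h1
        _ ≤ m 1 * m (a + b + 2) := h2
        _ = m 1 * m (a + 1 + b + 1) := by rw [show a + b + 2 = a + 1 + b + 1 by omega]
  -- conclude, wlog a ≤ b
  have hm1 : m 1 = w ⬝ᵥ N *ᵥ w := by simp [m]
  rw [← hm1]
  show m (a + 1) * m (b + 1) ≤ m 1 * m (a + b + 1)
  rcases le_total a b with hab | hab
  · exact hchain a b hab
  · have := hchain b a hab
    calc m (a + 1) * m (b + 1) = m (b + 1) * m (a + 1) := by ring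
      _ ≤ m 1 * m (b + a + 1) := this
      _ = m 1 * m (a + b + 1) := by rw [show b + a + 1 = a + b + 1 by omega]
noncomputable def cf (B N : Matrix (Fin n) (Fin n) ℝ) (v : Fin n → ℝ) (k p : ℕ) : ℝ :=
  v ⬝ᵥ B ^ k *ᵥ (N ^ p *ᵥ v)

lemma cf_zero (B N : Matrix (Fin n) (Fin n) ℝ) (v : Fin n → ℝ) (p : ℕ) :
    cf B N v 0 p = v ⬝ᵥ N ^ p *ᵥ v := by
  simp [cf]

lemma cf_k0 (B N : Matrix (Fin n) (Fin n) ℝ) (v : Fin n → ℝ) (k : ℕ) :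
    cf B N v k 0 = v ⬝ᵥ B ^ k *ᵥ v := by
  simp [cf]

lemma cf_rec {B N : Matrix (Fin n) (Fin n) ℝ} {v : Fin n → ℝ} {β : ℝ}
    (hSM : B = N - β • vecMulVec v v) (k p : ℕ) :
    cf B N v (k + 1) p = cf B N v k (p + 1) - β * ((v ⬝ᵥ N ^ p *ᵥ v) * cf B N v k 0) := by
  have hBx : B *ᵥ (N ^ p *ᵥ v) = N ^ (p + 1) *ᵥ v - (β * (v ⬝ᵥ N ^ p *ᵥ v)) • v := by
    rw [hSM, Matrix.sub_mulVec, Matrix.smul_mulVec, _root_.vecMulVec_mulVec,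
      Matrix.mulVec_mulVec, ← pow_succ', smul_smul]
  unfold cf
  simp only [pow_zero, Matrix.one_mulVec]
  rw [pow_succ, ← Matrix.mulVec_mulVec, hBx, Matrix.mulVec_sub,
    Matrix.mulVec_smul, dotProduct_sub, dotProduct_smul, smul_eq_mul]
  ring

lemma cf_upper {B N : Matrix (Fin n) (Fin n) ℝ} {v : Fin n → ℝ} {β : ℝ}
    (hSM : B = N - β • vecMulVec v v) (hβ : 0 ≤ β)
    (hN : N.PosDef) (hB : B.PosDef) (k : ℕ) :
    ∀ p, cf B N v k p ≤ v ⬝ᵥ N ^ (k + p) *ᵥ v := by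
  induction k with
  | zero => intro p; rw [cf_zero]; simp
  | succ k ih =>
    intro p
    rw [cf_rec hSM]
    have h1 : 0 ≤ v ⬝ᵥ N ^ p *ᵥ v := by simpa using (posDef_pow hN p).posSemidef.dotProduct_mulVec_nonneg v
    have h2 : 0 ≤ cf B N v k 0 := by
      rw [cf_k0]; simpa using (posDef_pow hB k).posSemidef.dotProduct_mulVec_nonneg v
    have h3 := ih (p + 1)
    have : (0:ℝ) ≤ β * ((v ⬝ᵥ N ^ p *ᵥ v) * cf B N v k 0) :=
      mul_nonneg hβ (mul_nonneg h1 h2)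
    have h4 : k + (p + 1) = k + 1 + p := by omega
    rw [h4] at h3
    linarith

lemma mu_eq_m {N : Matrix (Fin n) (Fin n) ℝ} (hNt : Nᵀ = N) (w : Fin n → ℝ) (p : ℕ) :
    (N *ᵥ w) ⬝ᵥ N ^ p *ᵥ (N *ᵥ w) = w ⬝ᵥ N ^ (p + 2) *ᵥ w := by
  rw [Matrix.mulVec_mulVec, ← pow_succ]
  have h := dot_shift' N (N ^ (p + 1)) w w
  rw [hNt] at h
  rw [← h, ← pow_succ']

lemma cf_lower {B N : Matrix (Fin n) (Fin n) ℝ} {w : Fin n → ℝ} {β : ℝ} {q : ℕ}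
    (hSM : B = N - β • vecMulVec (N *ᵥ w) (N *ᵥ w))
    (hβ : 0 ≤ β) (hN : N.PosDef) (hB : B.PosDef) :
    ∀ k p, k + p + 1 = q →
      (w ⬝ᵥ N ^ (q + 1) *ᵥ w) - β * k * ((w ⬝ᵥ N *ᵥ w) * (w ⬝ᵥ N ^ (q + 1) *ᵥ w)) ≤
        cf B N (N *ᵥ w) k p := by
  have hNt : Nᵀ = N := hN.isHermitian
  set v : Fin n → ℝ := N *ᵥ w with hv
  induction q using Nat.strong_induction_on with
  | _ q ihq => ?_
  clear ihq
  intro k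
  induction k with
  | zero =>
    intro p hp
    rw [cf_zero, mu_eq_m hNt]
    have : p + 2 = q + 1 := by omega
    rw [this]
    simp
  | succ k ih =>
    intro p hp
    rw [cf_rec hSM]
    have h1 := ih (p + 1) (by omega)
    -- bound on the correction term
    have hμp : 0 ≤ v ⬝ᵥ N ^ p *ᵥ v := by simpa using (posDef_pow hN p).posSemidef.dotProduct_mulVec_nonneg v
    have hck : cf B N v k 0 ≤ v ⬝ᵥ N ^ k *ᵥ v := by
      have := cf_upper hSM hβ hN hB k 0
      simpa using this
    have hμk : v ⬝ᵥ N ^ k *ᵥ v = w ⬝ᵥ N ^ (k + 2) *ᵥ w := mu_eq_m hNt w k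
    have hμp' : v ⬝ᵥ N ^ p *ᵥ v = w ⬝ᵥ N ^ (p + 2) *ᵥ w := mu_eq_m hNt w p
    have hmom := moment_prod_le hN w (p + 1) (k + 1)
    have hq1 : p + 1 + (k + 1) + 1 = q + 1 := by omega
    rw [hq1] at hmom
    have hprod : (v ⬝ᵥ N ^ p *ᵥ v) * cf B N v k 0 ≤
        (w ⬝ᵥ N *ᵥ w) * (w ⬝ᵥ N ^ (q + 1) *ᵥ w) := by
      calc (v ⬝ᵥ N ^ p *ᵥ v) * cf B N v k 0 ≤ (v ⬝ᵥ N ^ p *ᵥ v) * (v ⬝ᵥ N ^ k *ᵥ v) :=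
            mul_le_mul_of_nonneg_left hck hμp
        _ = (w ⬝ᵥ N ^ (p + 2) *ᵥ w) * (w ⬝ᵥ N ^ (k + 2) *ᵥ w) := by rw [hμk, hμp']
        _ ≤ (w ⬝ᵥ N *ᵥ w) * (w ⬝ᵥ N ^ (q + 1) *ᵥ w) := by
            have e1 : p + 2 = p + 1 + 1 := by omega
            have e2 : k + 2 = k + 1 + 1 := by omega
            rw [e1, e2]; exact hmom
    have hβk : β * ((v ⬝ᵥ N ^ p *ᵥ v) * cf B N v k 0) ≤
        β * ((w ⬝ᵥ N *ᵥ w) * (w ⬝ᵥ N ^ (q + 1) *ᵥ w)) :=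
      mul_le_mul_of_nonneg_left hprod hβ
    push_cast
    push_cast at h1
    linarith
theorem trace_inv_pow_rank_one_update_le {n q : ℕ} (hq : 10 ≤ q)
    (ε : ℝ) (hε : 0 < ε) (hε1 : ε ≤ 1 / 10)
    (Y : Matrix (Fin n) (Fin n) ℝ) (hY : Y.PosDef) (w : Fin n → ℝ)
    (hw : w ⬝ᵥ Y⁻¹.mulVec w ≤ ε / q) :
    (((Y + vecMulVec w w) ^ q)⁻¹).trace ≤
      ((Y ^ q)⁻¹).trace - q * (1 - ε) * (w ⬝ᵥ ((Y ^ (q + 1))⁻¹).mulVec w) := by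
  rw [← Matrix.inv_pow', ← Matrix.inv_pow', show ((Y ^ (q+1))⁻¹).mulVec w = (Y⁻¹ ^ (q+1)) *ᵥ w by
    rw [Matrix.inv_pow']]
  set N : Matrix (Fin n) (Fin n) ℝ := Y⁻¹ with hNdef
  set A : Matrix (Fin n) (Fin n) ℝ := Y + vecMulVec w w with hAdef
  set B : Matrix (Fin n) (Fin n) ℝ := A⁻¹ with hBdef
  have hNd : N.PosDef := hY.inv
  have hNt : Nᵀ = N := hNd.isHermitian
  have hW : (vecMulVec w w).PosSemidef := by
    refine Matrix.PosSemidef.of_dotProduct_mulVec_nonneg ?_ ?_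
    · ext i j; simp [vecMulVec_apply, mul_comm]
    · intro x
      rw [_root_.vecMulVec_mulVec w w x]
      simp only [star_trivial, dotProduct_smul, smul_eq_mul]
      rw [dotProduct_comm x w]
      exact mul_self_nonneg _
  have hA : A.PosDef := hY.add_posSemidef hW
  have hB : B.PosDef := hA.inv
  have hBt : Bᵀ = B := hB.isHermitian
  -- basic invertibility
  have hYdet : IsUnit Y.det := (Matrix.isUnit_iff_isUnit_det Y).mp hY.isUnit
  have hAdet : IsUnit A.det := (Matrix.isUnit_iff_isUnit_det A).mp hA.isUnit
  have hYN : Y * N = 1 := Matrix.mul_nonsing_inv Y hYdet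
  have hNY : N * Y = 1 := Matrix.nonsing_inv_mul Y hYdet
  have hBA : B * A = 1 := Matrix.nonsing_inv_mul A hAdet
  -- scalars and vectors
  set t : ℝ := w ⬝ᵥ N *ᵥ w with htdef
  have ht0 : 0 ≤ t := by simpa using hNd.posSemidef.dotProduct_mulVec_nonneg w
  have htq : t ≤ ε / q := hw
  have h1t : (0:ℝ) < 1 + t := by linarith
  set β : ℝ := (1 + t)⁻¹ with hβdef
  have hβ1t : β * (1 + t) = 1 := inv_mul_cancel₀ (ne_of_gt h1t)
  have hβ0 : 0 ≤ β := le_of_lt (inv_pos.mpr h1t)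
  set v : Fin n → ℝ := N *ᵥ w with hvdef
  -- A *ᵥ v
  have hAv : A *ᵥ v = (1 + t) • w := by
    rw [hAdef, Matrix.add_mulVec, hvdef, Matrix.mulVec_mulVec, hYN, Matrix.one_mulVec,
      _root_.vecMulVec_mulVec]
    rw [show w ⬝ᵥ N *ᵥ w = t from rfl]
    rw [add_smul, one_smul]
  -- Sherman-Morrison
  have hSM : B = N - β • vecMulVec v v := by
    rw [hBdef]
    apply Matrix.inv_eq_right_inv
    rw [Matrix.mul_sub, Matrix.mul_smul, _root_.mul_vecMulVec, hAv, vecMulVec_smul_left,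
      hAdef, Matrix.add_mul, hYN, _root_.vecMulVec_mul, hNt]
    rw [show N *ᵥ w = v from rfl, smul_smul, hβ1t, one_smul]
    exact add_sub_cancel_right 1 (vecMulVec w v)
  have hNB : N - B = β • vecMulVec v v := by rw [hSM, sub_sub_cancel]
  have hSM' : B = N - β • vecMulVec (N *ᵥ w) (N *ᵥ w) := by rw [hSM, hvdef]
  -- trace identity
  have htel := telescope_pow_sub N B q
  rw [hNB] at htel
  have hterm : ∀ k : ℕ, B ^ k * (β • vecMulVec v v) * N ^ (q - 1 - k)
      = β • vecMulVec (B ^ k *ᵥ v) (N ^ (q - 1 - k) *ᵥ v) := by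
    intro k
    rw [Matrix.mul_smul, Matrix.smul_mul, _root_.mul_vecMulVec, _root_.vecMulVec_mul,
      transpose_pow_symm' hNt]
  have htr : (N ^ q).trace - (B ^ q).trace
      = ∑ k ∈ Finset.range q, β * ((N ^ (q - 1 - k) *ᵥ v) ⬝ᵥ (B ^ k *ᵥ v)) := by
    rw [← Matrix.trace_sub, htel, Matrix.trace_sum]
    refine Finset.sum_congr rfl fun k _ => ?_
    rw [hterm k, Matrix.trace_smul, trace_vecMulVec']
    simp [smul_eq_mul]
  have hdotcf : ∀ k p : ℕ, (N ^ p *ᵥ v) ⬝ᵥ (B ^ k *ᵥ v) = cf B N v k p := by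
    intro k p
    have h := dot_shift' (B ^ k) (N ^ p) v v
    rw [transpose_pow_symm' hBt, ← Matrix.mulVec_mulVec] at h
    rw [dotProduct_comm, ← h]
    rfl
  set M : ℝ := w ⬝ᵥ N ^ (q + 1) *ᵥ w with hMdef
  have hM0 : 0 ≤ M := by
    rw [hMdef]; simpa using (posDef_pow hNd (q + 1)).posSemidef.dotProduct_mulVec_nonneg w
  -- lower bound every summand
  have hsum1 : ∀ k ∈ Finset.range q,
      β * (M - β * (k : ℝ) * (t * M)) ≤ β * ((N ^ (q - 1 - k) *ᵥ v) ⬝ᵥ (B ^ k *ᵥ v)) := by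
    intro k hk
    rw [hdotcf]
    have hk' : k < q := Finset.mem_range.mp hk
    have hlow := cf_lower (q := q) hSM' hβ0 hNd hB k (q - 1 - k) (by omega)
    rw [← hvdef, ← hMdef, ← htdef] at hlow
    exact mul_le_mul_of_nonneg_left hlow hβ0
  have hsum2 := Finset.sum_le_sum hsum1
  -- Gauss sum
  have hgauss : ∑ k ∈ Finset.range q, (k : ℝ) = (q : ℝ) * ((q : ℝ) - 1) / 2 := by
    have h := Finset.sum_range_id_mul_two q
    have h2 : ((∑ i ∈ Finset.range q, i : ℕ) : ℝ) * 2 = (q : ℝ) * ((q : ℝ) - 1) := by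
      rw [← Nat.cast_ofNat, ← Nat.cast_mul, h]
      rw [Nat.cast_mul, Nat.cast_sub (by omega)]
      norm_num
    have h3 : ((∑ i ∈ Finset.range q, i : ℕ) : ℝ) = ∑ k ∈ Finset.range q, (k : ℝ) := by
      push_cast; ring
    linarith [h2, h3.symm.le]
  have hsum3 : ∑ k ∈ Finset.range q, β * (M - β * (k : ℝ) * (t * M))
      = (q : ℝ) * (β * M) - β * β * t * M * ((q : ℝ) * ((q : ℝ) - 1) / 2) := by
    have hcong : ∀ k ∈ Finset.range q,
        β * (M - β * (k : ℝ) * (t * M)) = β * M - (β * β * t * M) * (k : ℝ) :=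
      fun k _ => by ring
    rw [Finset.sum_congr rfl hcong, Finset.sum_sub_distrib, Finset.sum_const,
      ← Finset.mul_sum, hgauss, Finset.card_range, nsmul_eq_mul]
  -- the numeric inequality
  have hQ : (10 : ℝ) ≤ (q : ℝ) := by exact_mod_cast hq
  have hQ0 : (0 : ℝ) < (q : ℝ) := by linarith
  have htQ : t * (q : ℝ) ≤ ε := by
    have := htq
    rw [div_eq_mul_inv] at this
    calc t * (q:ℝ) ≤ (ε * (q:ℝ)⁻¹) * (q:ℝ) := mul_le_mul_of_nonneg_right this (le_of_lt hQ0)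
      _ = ε := by field_simp
  have hβle1 : β ≤ 1 := by nlinarith [hβ1t, hβ0, ht0]
  have hβge : 1 - t ≤ β := by nlinarith [hβ1t, hβ0, ht0, h1t]
  have key0 : (q : ℝ) * (1 - ε) ≤ (q : ℝ) * β - β * β * t * ((q : ℝ) * ((q : ℝ) - 1) / 2) := by
    have h5 : β * β * t ≤ t := by nlinarith [hβle1, hβ0, ht0]
    have h6 : (q : ℝ) * (1 - t) ≤ (q : ℝ) * β := by nlinarith [hβge, hQ0]
    have h7 : β * β * t * ((q : ℝ) * ((q : ℝ) - 1) / 2) ≤ t * ((q : ℝ) * ((q : ℝ) - 1) / 2) := by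
      apply mul_le_mul_of_nonneg_right h5
      nlinarith [hQ]
    have h8 : t * ((q : ℝ) * ((q : ℝ) + 1) / 2) ≤ ε * (q : ℝ) := by
      have : t * (q:ℝ) * (((q:ℝ) + 1) / 2) ≤ ε * (((q:ℝ) + 1) / 2) :=
        mul_le_mul_of_nonneg_right htQ (by nlinarith)
      nlinarith [this, hε.le, hQ]
    nlinarith [h5, h6, h7, h8, ht0, hQ0]
  have key := mul_le_mul_of_nonneg_right key0 hM0
  -- put everything together
  have hfinal : (q : ℝ) * (1 - ε) * M ≤ (N ^ q).trace - (B ^ q).trace := by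
    rw [htr]
    calc (q : ℝ) * (1 - ε) * M
        ≤ ((q : ℝ) * β - β * β * t * ((q : ℝ) * ((q : ℝ) - 1) / 2)) * M := key
      _ = (q : ℝ) * (β * M) - β * β * t * M * ((q : ℝ) * ((q : ℝ) - 1) / 2) := by ring
      _ = ∑ k ∈ Finset.range q, β * (M - β * (k : ℝ) * (t * M)) := hsum3.symm
      _ ≤ ∑ k ∈ Finset.range q, β * ((N ^ (q - 1 - k) *ᵥ v) ⬝ᵥ (B ^ k *ᵥ v)) := hsum2
  linarith [hfinal]
end

section
/- Let A be symmetric with ℓI ≺ A ≺ uI, let Δ_u ≥ 0 and Δ_ℓ ≥ 0 with ℓ + Δ_ℓ < u + Δ_u and (ℓ + Δ_ℓ)I ≺ A. Define f(t) = tr(((u + tΔ_u)I - A)^{-q}) + tr((A - (ℓ + tΔ_ℓ)I)^{-q}) for t ∈ [0,1]. Then f is convex on [0,1], and hence f'(1) ≥ f(1) - f(0). -/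
open Matrix

section aux
variable {n : ℕ}

lemma posDef_conj_aux {M U : Matrix (Fin n) (Fin n) ℝ} (hM : M.PosDef)
    (hU' : star U * U = 1) : ((star U) * M * U).PosDef := by
  refine Matrix.PosDef.of_dotProduct_mulVec_pos (Matrix.isHermitian_conjTranspose_mul_mul U hM.1) fun x hx => ?_
  have hx' : U *ᵥ x ≠ 0 := by
    intro h
    apply hx
    have h2 := congrArg (fun v => (star U) *ᵥ v) h
    simpa [Matrix.mulVec_mulVec, hU'] using h2
  have := hM.dotProduct_mulVec_pos hx'
  simp only [star_mulVec, dotProduct_mulVec, vecMul_vecMul] at this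
  rw [dotProduct_mulVec, Matrix.star_eq_conjTranspose]
  exact this

lemma conj_pow_aux (U D : Matrix (Fin n) (Fin n) ℝ) (hU' : star U * U = 1) (q : ℕ) :
    (U * D * star U) ^ q = U * D ^ q * star U := by
  have key : ∀ X : Matrix (Fin n) (Fin n) ℝ, star U * (U * X) = X := by
    intro X; rw [← Matrix.mul_assoc, hU', Matrix.one_mul]
  induction q with
  | zero =>
    have : star U * U = 1 := hU'
    simp only [pow_zero, Matrix.mul_one]
    rw [mul_eq_one_comm] at this
    exact this.symm
  | succ k ih =>
    rw [pow_succ, pow_succ, ih]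
    simp only [Matrix.mul_assoc, key]

lemma trace_conj_aux (U D : Matrix (Fin n) (Fin n) ℝ) (hU' : star U * U = 1) :
    (U * D * star U).trace = D.trace := by
  rw [Matrix.trace_mul_cycle, hU', Matrix.one_mul]

lemma diag_inv_aux (w : Fin n → ℝ) (hw : ∀ i, w i ≠ 0) :
    (Matrix.diagonal w)⁻¹ = Matrix.diagonal (fun i => (w i)⁻¹) := by
  refine Matrix.inv_eq_right_inv ?_
  rw [Matrix.diagonal_mul_diagonal, ← Matrix.diagonal_one]
  have : (fun i => w i * (w i)⁻¹) = fun _ => (1:ℝ) := funext fun i => mul_inv_cancel₀ (hw i)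
  rw [this]


lemma trace_inv_pow_aux (U : Matrix (Fin n) (Fin n) ℝ) (hU : U * star U = 1)
    (d : Fin n → ℝ) (hd : ∀ i, 0 < d i) (q : ℕ) :
    (((U * Matrix.diagonal d * star U) ^ q)⁻¹).trace = ∑ i, ((d i) ^ q)⁻¹ := by
  have hU' : star U * U = 1 := mul_eq_one_comm.mp hU
  rw [conj_pow_aux U _ hU', Matrix.diagonal_pow]
  have hinv : (U * Matrix.diagonal (d ^ q) * star U)⁻¹
      = U * Matrix.diagonal (fun i => (d i ^ q)⁻¹) * star U := by
    refine Matrix.inv_eq_right_inv ?_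
    have key : ∀ X : Matrix (Fin n) (Fin n) ℝ, star U * (U * X) = X := by
      intro X; rw [← Matrix.mul_assoc, hU', Matrix.one_mul]
    simp only [Matrix.mul_assoc, key]
    rw [← Matrix.mul_assoc (Matrix.diagonal (d ^ q)), Matrix.diagonal_mul_diagonal]
    have hdd : (Matrix.diagonal fun i => (d ^ q) i * (d i ^ q)⁻¹) = (1 : Matrix (Fin n) (Fin n) ℝ) := by
      rw [← Matrix.diagonal_one]
      have : (fun i => (d ^ q) i * (d i ^ q)⁻¹) = fun _ => (1:ℝ) :=
        funext fun i => mul_inv_cancel₀ (pow_ne_zero q (hd i).ne')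
      rw [this]
    rw [hdd, Matrix.one_mul, hU]
  rw [hinv, trace_conj_aux _ _ hU', Matrix.trace_diagonal]

end aux

section spec
variable {n : ℕ} (A : Matrix (Fin n) (Fin n) ℝ) (hA : A.IsHermitian)

lemma spectral_real :
    A = (hA.eigenvectorUnitary : Matrix (Fin n) (Fin n) ℝ)
      * Matrix.diagonal hA.eigenvalues
      * star (hA.eigenvectorUnitary : Matrix (Fin n) (Fin n) ℝ) := by
  have h := hA.spectral_theorem
  simpa using h

lemma decomp_sub_left (c : ℝ) :
    c • (1 : Matrix (Fin n) (Fin n) ℝ) - A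
      = (hA.eigenvectorUnitary : Matrix (Fin n) (Fin n) ℝ)
        * Matrix.diagonal (fun i => c - hA.eigenvalues i)
        * star (hA.eigenvectorUnitary : Matrix (Fin n) (Fin n) ℝ) := by
  set U := (hA.eigenvectorUnitary : Matrix (Fin n) (Fin n) ℝ) with hUdef
  have hU : U * star U = 1 := Matrix.mem_unitaryGroup_iff.mp hA.eigenvectorUnitary.2
  have h1 : c • (1 : Matrix (Fin n) (Fin n) ℝ)
      = U * Matrix.diagonal (fun _ => c) * star U := by
    rw [← Matrix.smul_one_eq_diagonal, Matrix.mul_smul, Matrix.smul_mul, Matrix.mul_one, hU]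
  conv_lhs => rw [h1, spectral_real A hA]
  rw [← Matrix.sub_mul, ← Matrix.mul_sub, Matrix.diagonal_sub]

lemma decomp_sub_right (c : ℝ) :
    A - c • (1 : Matrix (Fin n) (Fin n) ℝ)
      = (hA.eigenvectorUnitary : Matrix (Fin n) (Fin n) ℝ)
        * Matrix.diagonal (fun i => hA.eigenvalues i - c)
        * star (hA.eigenvectorUnitary : Matrix (Fin n) (Fin n) ℝ) := by
  set U := (hA.eigenvectorUnitary : Matrix (Fin n) (Fin n) ℝ) with hUdef
  have hU : U * star U = 1 := Matrix.mem_unitaryGroup_iff.mp hA.eigenvectorUnitary.2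
  have h1 : c • (1 : Matrix (Fin n) (Fin n) ℝ)
      = U * Matrix.diagonal (fun _ => c) * star U := by
    rw [← Matrix.smul_one_eq_diagonal, Matrix.mul_smul, Matrix.smul_mul, Matrix.mul_one, hU]
  conv_lhs => rw [h1, spectral_real A hA]
  rw [← Matrix.sub_mul, ← Matrix.mul_sub, Matrix.diagonal_sub]

end spec

section scalar

lemma bern_up (q : ℕ) {a b : ℝ} (ha : 0 < a) (hab : a ≤ b) :
    a ^ (q+1) + (q:ℝ) * (b - a) * a ^ q ≤ a * b ^ q := by
  have h := one_add_mul_le_pow (show (-2:ℝ) ≤ (b - a) / a from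
    le_trans (by norm_num) (div_nonneg (sub_nonneg.mpr hab) ha.le)) q
  have h2 : (1 + (b - a) / a) = b / a := by field_simp; ring
  rw [h2, div_pow] at h
  have h3 := mul_le_mul_of_nonneg_left h (pow_pos ha (q+1)).le
  have haq : a ^ q ≠ 0 := (pow_pos ha q).ne'
  calc a ^ (q+1) + (q:ℝ) * (b - a) * a ^ q
      = a ^ (q+1) * (1 + (q:ℝ) * ((b - a) / a)) := by
        field_simp
        ring
    _ ≤ a ^ (q+1) * (b ^ q / a ^ q) := h3
    _ = a * b ^ q := by
        rw [pow_succ]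
        field_simp

lemma bern_dn (q : ℕ) {a b : ℝ} (ha : 0 < a) (hab : a ≤ b) :
    b ^ (q+1) + (q:ℝ) * (a - b) * b ^ q ≤ a ^ q * b := by
  have hb : 0 < b := lt_of_lt_of_le ha hab
  have h := one_add_mul_le_pow (show (-2:ℝ) ≤ (a - b) / b by
    rw [le_div_iff₀ hb]; nlinarith) q
  have h2 : (1 + (a - b) / b) = a / b := by field_simp; ring
  rw [h2, div_pow] at h
  have h3 := mul_le_mul_of_nonneg_left h (pow_pos hb (q+1)).le
  have hbq : b ^ q ≠ 0 := (pow_pos hb q).ne'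
  calc b ^ (q+1) + (q:ℝ) * (a - b) * b ^ q
      = b ^ (q+1) * (1 + (q:ℝ) * ((a - b) / b)) := by
        field_simp
        ring
    _ ≤ b ^ (q+1) * (a ^ q / b ^ q) := h3
    _ = a ^ q * b := by
        rw [pow_succ]
        field_simp

lemma scalar_upper (q : ℕ) {a b : ℝ} (ha : 0 < a) (hab : a ≤ b) :
    (b ^ q)⁻¹ - (a ^ q)⁻¹ ≤ -(q:ℝ) * (b - a) * (b ^ (q+1))⁻¹ := by
  have hb : 0 < b := lt_of_lt_of_le ha hab
  have haq : (0:ℝ) < a ^ q := pow_pos ha q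
  have hbq : (0:ℝ) < b ^ q := pow_pos hb q
  have hb1 : (0:ℝ) < b ^ (q+1) := pow_pos hb (q+1)
  have hB1 := bern_up q ha hab
  rw [show (b ^ q)⁻¹ - (a ^ q)⁻¹ = -((a ^ q)⁻¹ - (b ^ q)⁻¹) from by ring,
    show -(q:ℝ) * (b - a) * (b ^ (q+1))⁻¹ = -((q:ℝ) * (b - a) / b ^ (q+1)) from by ring,
    neg_le_neg_iff, inv_sub_inv haq.ne' hbq.ne', div_le_div_iff₀ hb1 (mul_pos haq hbq)]
  have hle : a ^ q ≤ b ^ q := pow_le_pow_left₀ ha.le hab q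
  nlinarith [pow_succ a q, pow_succ b q, mul_le_mul_of_nonneg_left hB1 hbq.le,
    mul_nonneg (mul_nonneg hbq.le (sub_nonneg.mpr hle)) (sub_nonneg.mpr hab)]

lemma scalar_lower (q : ℕ) {a b : ℝ} (ha : 0 < a) (hab : a ≤ b) :
    (a ^ q)⁻¹ - (b ^ q)⁻¹ ≤ (q:ℝ) * (b - a) * (a ^ (q+1))⁻¹ := by
  have hb : 0 < b := lt_of_lt_of_le ha hab
  have haq : (0:ℝ) < a ^ q := pow_pos ha q
  have hbq : (0:ℝ) < b ^ q := pow_pos hb q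
  have ha1 : (0:ℝ) < a ^ (q+1) := pow_pos ha (q+1)
  have hB2 := bern_dn q ha hab
  rw [inv_sub_inv haq.ne' hbq.ne',
    show (q:ℝ) * (b - a) * (a ^ (q+1))⁻¹ = (q:ℝ) * (b - a) / a ^ (q+1) from by ring,
    div_le_div_iff₀ (mul_pos haq hbq) ha1]
  have hle : a ^ q ≤ b ^ q := pow_le_pow_left₀ ha.le hab q
  nlinarith [pow_succ a q, pow_succ b q, mul_le_mul_of_nonneg_left hB2 haq.le,
    mul_nonneg (mul_nonneg haq.le (sub_nonneg.mpr hle)) (sub_nonneg.mpr hab)]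

end scalar

section convx
open Set

lemma convexOn_finset_sum {ι : Type*} (t : Finset ι) {s : Set ℝ} (hs : Convex ℝ s)
    {f : ι → ℝ → ℝ} (h : ∀ i ∈ t, ConvexOn ℝ s (f i)) :
    ConvexOn ℝ s (fun x => ∑ i ∈ t, f i x) := by
  classical
  induction t using Finset.induction_on with
  | empty => simpa using convexOn_const 0 hs
  | insert a t' hnotmem ih =>
    simp only [Finset.sum_insert hnotmem]
    exact (h a (Finset.mem_insert_self a t')).add
      (ih fun i hi => h i (Finset.mem_insert_of_mem hi))

lemma convex_term (q : ℕ) (c dd : ℝ)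
    (hpos : ∀ t ∈ Set.Icc (0:ℝ) 1, 0 < c + t * dd) :
    ConvexOn ℝ (Set.Icc (0:ℝ) 1) (fun t => ((c + t * dd) ^ q)⁻¹) := by
  have h := (convexOn_zpow (-(q:ℤ))).comp_affineMap
    (AffineMap.lineMap c (c + dd) : ℝ →ᵃ[ℝ] ℝ)
  have hsub : Set.Icc (0:ℝ) 1 ⊆ (AffineMap.lineMap c (c + dd) : ℝ →ᵃ[ℝ] ℝ) ⁻¹' (Ioi 0) := by
    intro t ht
    have := hpos t ht
    simp only [Set.mem_preimage, AffineMap.lineMap_apply_ring, Set.mem_Ioi]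
    nlinarith
  refine (h.subset hsub (convex_Icc 0 1)).congr ?_
  intro t ht
  simp only [Function.comp_apply, AffineMap.lineMap_apply_ring]
  rw [_root_.zpow_neg, zpow_natCast]
  congr 2
  ring

end convx

theorem barrier_potential_convex {n q : ℕ} (hq : 1 ≤ q)
    (A : Matrix (Fin n) (Fin n) ℝ) (hA : A.IsHermitian)
    (u ℓ Δu Δℓ : ℝ) (hΔu : 0 ≤ Δu) (hΔℓ : 0 ≤ Δℓ)
    (hul : ℓ + Δℓ < u + Δu)
    (hu : (u • (1 : Matrix (Fin n) (Fin n) ℝ) - A).PosDef)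
    (hl : (A - ℓ • (1 : Matrix (Fin n) (Fin n) ℝ)).PosDef)
    (hl' : (A - (ℓ + Δℓ) • (1 : Matrix (Fin n) (Fin n) ℝ)).PosDef) :
    ConvexOn ℝ (Set.Icc (0 : ℝ) 1) (fun t : ℝ =>
      ((((u + t * Δu) • (1 : Matrix (Fin n) (Fin n) ℝ) - A) ^ q)⁻¹).trace +
      (((A - (ℓ + t * Δℓ) • (1 : Matrix (Fin n) (Fin n) ℝ)) ^ q)⁻¹).trace) ∧
    ((((u + Δu) • (1 : Matrix (Fin n) (Fin n) ℝ) - A) ^ q)⁻¹).trace +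
      (((A - (ℓ + Δℓ) • (1 : Matrix (Fin n) (Fin n) ℝ)) ^ q)⁻¹).trace -
      (((u • (1 : Matrix (Fin n) (Fin n) ℝ) - A) ^ q)⁻¹).trace -
      (((A - ℓ • (1 : Matrix (Fin n) (Fin n) ℝ)) ^ q)⁻¹).trace ≤
    -(q : ℝ) * Δu * ((((u + Δu) • (1 : Matrix (Fin n) (Fin n) ℝ) - A) ^ (q + 1))⁻¹).trace +
      (q : ℝ) * Δℓ * (((A - (ℓ + Δℓ) • (1 : Matrix (Fin n) (Fin n) ℝ)) ^ (q + 1))⁻¹).trace := by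
  classical
  set U : Matrix (Fin n) (Fin n) ℝ := (hA.eigenvectorUnitary : Matrix (Fin n) (Fin n) ℝ)
    with hUdef
  set lam : Fin n → ℝ := hA.eigenvalues with hlam
  have hU : U * star U = 1 := Matrix.mem_unitaryGroup_iff.mp hA.eigenvectorUnitary.2
  have hU' : star U * U = 1 := Matrix.mem_unitaryGroup_iff'.mp hA.eigenvectorUnitary.2
  have keyL : ∀ X : Matrix (Fin n) (Fin n) ℝ, star U * (U * X) = X := by
    intro X; rw [← Matrix.mul_assoc, hU', Matrix.one_mul]
  -- entrywise positivity facts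
  have hdiag_pos : ∀ (M : Matrix (Fin n) (Fin n) ℝ) (d : Fin n → ℝ),
      M.PosDef → M = U * Matrix.diagonal d * star U → ∀ i, 0 < d i := by
    intro M d hM hMd
    have h1 : (star U) * M * U = Matrix.diagonal d := by
      rw [hMd]
      simp only [Matrix.mul_assoc, keyL]
      rw [hU', Matrix.mul_one]
    have h2 := posDef_conj_aux hM hU'
    rw [h1] at h2
    exact Matrix.posDef_diagonal_iff.mp h2
  have hlam_u : ∀ i, lam i < u := fun i => by
    have := hdiag_pos _ _ hu (decomp_sub_left A hA u) i
    linarith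
  have hlam_l' : ∀ i, ℓ + Δℓ < lam i := fun i => by
    have := hdiag_pos _ _ hl' (decomp_sub_right A hA (ℓ + Δℓ)) i
    linarith
  have hlam_l : ∀ i, ℓ < lam i := fun i => by
    have := hlam_l' i; linarith
  -- trace formulas
  have traceL : ∀ (c : ℝ), (∀ i, lam i < c) → ∀ p : ℕ,
      (((c • (1 : Matrix (Fin n) (Fin n) ℝ) - A) ^ p)⁻¹).trace
        = ∑ i, ((c - lam i) ^ p)⁻¹ := by
    intro c hc p
    rw [decomp_sub_left A hA c]
    exact trace_inv_pow_aux U hU _ (fun i => sub_pos.mpr (hc i)) p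
  have traceR : ∀ (c : ℝ), (∀ i, c < lam i) → ∀ p : ℕ,
      (((A - c • (1 : Matrix (Fin n) (Fin n) ℝ)) ^ p)⁻¹).trace
        = ∑ i, ((lam i - c) ^ p)⁻¹ := by
    intro c hc p
    rw [decomp_sub_right A hA c]
    exact trace_inv_pow_aux U hU _ (fun i => sub_pos.mpr (hc i)) p
  constructor
  · -- convexity
    have hconv : ConvexOn ℝ (Set.Icc (0:ℝ) 1) (fun t : ℝ =>
        ∑ i, ((((u - lam i) + t * Δu) ^ q)⁻¹ + (((lam i - ℓ) + t * (-Δℓ)) ^ q)⁻¹)) := by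
      refine convexOn_finset_sum Finset.univ (convex_Icc 0 1) (fun i _ => ?_)
      refine ConvexOn.add ?_ ?_
      · refine convex_term q (u - lam i) Δu (fun t ht => ?_)
        have h1 := hlam_u i
        have h2 : 0 ≤ t * Δu := mul_nonneg ht.1 hΔu
        linarith
      · refine convex_term q (lam i - ℓ) (-Δℓ) (fun t ht => ?_)
        have h1 := hlam_l' i
        have h2 : t * Δℓ ≤ Δℓ := by nlinarith [ht.1, ht.2]
        nlinarith
    refine hconv.congr (fun t ht => ?_)
    have h1 : ∀ i, lam i < u + t * Δu := fun i => by
      have := hlam_u i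
      have h2 : 0 ≤ t * Δu := mul_nonneg ht.1 hΔu
      linarith
    have h2 : ∀ i, ℓ + t * Δℓ < lam i := fun i => by
      have := hlam_l' i
      have h3 : t * Δℓ ≤ Δℓ := by nlinarith [ht.1, ht.2]
      linarith
    rw [traceL _ h1 q, traceR _ h2 q, ← Finset.sum_add_distrib]
    refine Finset.sum_congr rfl (fun i _ => ?_)
    congr 2 <;> ring
  · -- derivative inequality
    have h1 : ∀ i, lam i < u + Δu := fun i => by
      have := hlam_u i; linarith
    rw [traceL _ h1 q, traceL _ h1 (q+1), traceL _ hlam_u q,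
      traceR _ hlam_l' q, traceR _ hlam_l' (q+1), traceR _ hlam_l q,
      Finset.mul_sum, Finset.mul_sum, ← Finset.sum_add_distrib,
      ← Finset.sum_add_distrib, ← Finset.sum_sub_distrib, ← Finset.sum_sub_distrib]
    refine Finset.sum_le_sum (fun i _ => ?_)
    have ha1 : 0 < u - lam i := sub_pos.mpr (hlam_u i)
    have hab1 : u - lam i ≤ u + Δu - lam i := by linarith
    have hup := scalar_upper q ha1 hab1
    have heq1 : (u + Δu - lam i) - (u - lam i) = Δu := by ring
    rw [heq1] at hup
    have ha2 : 0 < lam i - (ℓ + Δℓ) := sub_pos.mpr (hlam_l' i)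
    have hab2 : lam i - (ℓ + Δℓ) ≤ lam i - ℓ := by linarith
    have hlo := scalar_lower q ha2 hab2
    have heq2 : (lam i - ℓ) - (lam i - (ℓ + Δℓ)) = Δℓ := by ring
    rw [heq2] at hlo
    linarith
end

section
/- Let u_0 = (2n)^{1/q}, ℓ_0 = -(2n)^{1/q} and let u_k = u_0 + Σ_{j<k} Δ_{u,j}, ℓ_k = ℓ_0 + Σ_{j<k} Δ_{ℓ,j} where for each j, Δ_{u,j} = (1+2ε)c_j and Δ_{ℓ,j} = (1-2ε)c_j for some c_j > 0, and 0 < ε ≤ 1/8. If u_k - ℓ_k ≥ 4(2n)^{1/q}, then (u_k - ℓ_k)/u_k ≤ 8ε. -/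
open Finset

theorem barrier_gap_ratio_le {n q k : ℕ} (hn : 1 ≤ n) (hq : 1 ≤ q)
    (ε : ℝ) (hε : 0 < ε) (hε8 : ε ≤ 1 / 8)
    (c : Fin k → ℝ) (hc : ∀ j, 0 < c j)
    (hend : ((2 * n : ℝ) ^ ((1 : ℝ) / q) + ∑ j, (1 + 2 * ε) * c j) -
        (-((2 * n : ℝ) ^ ((1 : ℝ) / q)) + ∑ j, (1 - 2 * ε) * c j) ≥
        4 * (2 * n : ℝ) ^ ((1 : ℝ) / q)) :
    (((2 * n : ℝ) ^ ((1 : ℝ) / q) + ∑ j, (1 + 2 * ε) * c j) -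
        (-((2 * n : ℝ) ^ ((1 : ℝ) / q)) + ∑ j, (1 - 2 * ε) * c j)) /
      ((2 * n : ℝ) ^ ((1 : ℝ) / q) + ∑ j, (1 + 2 * ε) * c j) ≤ 8 * ε := by
  set a : ℝ := (2 * n : ℝ) ^ ((1 : ℝ) / q) with ha
  have ha0 : 0 < a := by
    apply Real.rpow_pos_of_pos
    positivity
  set S : ℝ := ∑ j, c j with hS
  have hS0 : 0 ≤ S := Finset.sum_nonneg fun j _ => (hc j).le
  have h1 : ∑ j, (1 + 2 * ε) * c j = (1 + 2 * ε) * S := by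
    rw [← Finset.mul_sum]
  have h2 : ∑ j, (1 - 2 * ε) * c j = (1 - 2 * ε) * S := by
    rw [← Finset.mul_sum]
  rw [h1, h2] at hend ⊢
  have hu : 0 < a + (1 + 2 * ε) * S := by nlinarith
  rw [div_le_iff₀ hu]
  nlinarith
end
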